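/- Let Γ be a graph and 𝓔 ⊆ E(Γ). Consider the linear maps f_𝓔: ℝ^{E(Γ^𝓔)} → ℝ^{E(Γ)} sending the basis vector of an edge e' to that of the edge under it, and g_𝓔: ℝ^{E(Γ^𝓔)} → ℝ^𝓔 sending the basis vector of e' to that of e if e' = e^s (the half-edge incident to the source of e) and to 0 otherwise. Then the map (f_𝓔, g_𝓔): ℝ^{E(Γ^𝓔)} → ℝ^{E(Γ)} × ℝ^𝓔 is a linear isomorphism, and it maps the subspace 𝓛_𝓔 (spanned by the vectors w_V over subsets V ⊆ V(Γ) with E(V,V^c) ⊆ 𝓔) onto {0} × L_𝓔. -/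

import Mathlib

open scoped Classical

/-- A finite multigraph: finite vertex and edge types, with source and target maps
(an orientation is fixed on each edge). -/
structure Multigraph where
  V : Type
  E : Type
  [fintypeV : Fintype V]
  [fintypeE : Fintype E]
  [decEqV : DecidableEq V]
  [decEqE : DecidableEq E]
  s : E → V
  t : E → V

attribute [instance] Multigraph.fintypeV Multigraph.fintypeE
attribute [instance] Multigraph.decEqV Multigraph.decEqE

namespace Multigraph

variable (G : Multigraph)

/-- Adjacency using only edges in `F`. -/
def adjOn (F : Finset G.E) (u v : G.V) : Prop :=
  ∃ e ∈ F, (G.s e = u ∧ G.t e = v) ∨ (G.s e = v ∧ G.t e = u)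

/-- Adjacency in `G`. -/
def adj : G.V → G.V → Prop := G.adjOn Finset.univ

/-- `G` is connected. -/
def Connected : Prop := ∀ u v : G.V, Relation.EqvGen G.adj u v

/-- Number of connected components of the spanning subgraph with edge set `F`. -/
noncomputable def b0 (F : Finset G.E) : ℕ :=
  Nat.card (Quotient (Relation.EqvGen.setoid (G.adjOn F)))

/-- `E(A∖B, B∖A)`: the set of edges connecting `A∖B` to `B∖A`. -/
def crossEdges (A B : Finset G.V) : Finset G.E :=
  Finset.univ.filter fun e =>
    (G.s e ∈ A \ B ∧ G.t e ∈ B \ A) ∨ (G.s e ∈ B \ A ∧ G.t e ∈ A \ B)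

/-- The valence of `v` in the edge set `F` (loops count twice). -/
def valE (F : Finset G.E) (v : G.V) : ℕ :=
  (F.filter fun e => G.s e = v).card + (F.filter fun e => G.t e = v).card

/-- `β_D(S) = deg(D|_S) − μ(S) + δ_{Γ,S}/2`. -/
noncomputable def beta (μ : G.V → ℝ) (D : G.V → ℤ) (S : Finset G.V) : ℝ :=
  (∑ v ∈ S, (D v : ℝ)) - (∑ v ∈ S, μ v) + (G.crossEdges S Sᶜ).card / 2

end Multigraph

namespace Multigraph

variable (G : Multigraph)

/-- The edge set of the subdivision `Γ^𝓔`: one edge for each `e ∉ 𝓔`, and two edges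
`e^s` (Boolean `true`, incident to the source) and `e^t` (Boolean `false`, incident to
the target) for each `e ∈ 𝓔`. -/
def EIdx (𝓔 : Finset G.E) : Type :=
  {e : G.E // e ∉ 𝓔} ⊕ ({e : G.E // e ∈ 𝓔} × Bool)

noncomputable instance (𝓔 : Finset G.E) : Fintype (G.EIdx 𝓔) := by
  unfold EIdx; infer_instance

/-- The map `(f_𝓔, g_𝓔) : ℝ^{E(Γ^𝓔)} → ℝ^{E(Γ)} × ℝ^𝓔`: `f_𝓔` sums the coordinates of
the edges lying over each edge of `Γ`, and `g_𝓔` records the coordinate of `e^s`. -/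
noncomputable def Fmap (𝓔 : Finset G.E) (x : G.EIdx 𝓔 → ℝ) :
    (G.E → ℝ) × ({e : G.E // e ∈ 𝓔} → ℝ) :=
  (fun e =>
    if h : e ∈ 𝓔 then x (Sum.inr (⟨e, h⟩, true)) + x (Sum.inr (⟨e, h⟩, false))
    else x (Sum.inl ⟨e, h⟩),
   fun e => x (Sum.inr (e, true)))

/-- The vector `w_V ∈ ℝ^{E(Γ^𝓔)}`: coefficient `+1` at half-edges over `E(V,V^c)`
incident to `V`, `−1` at those incident to `V^c`, and `0` elsewhere. -/
noncomputable def wVec (𝓔 : Finset G.E) (S : Finset G.V) : G.EIdx 𝓔 → ℝ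
  | Sum.inl _ => 0
  | Sum.inr (e, b) =>
      let v := if b then G.s e.1 else G.t e.1
      let w := if b then G.t e.1 else G.s e.1
      if v ∈ S ∧ w ∉ S then 1 else if w ∈ S ∧ v ∉ S then -1 else 0

/-- The subspace `𝓛_𝓔 ⊆ ℝ^{E(Γ^𝓔)}` spanned by the vectors `w_V` over all `V ⊆ V(Γ)`
with `E(V,V^c) ⊆ 𝓔`. -/
noncomputable def LLspace (𝓔 : Finset G.E) : Submodule ℝ (G.EIdx 𝓔 → ℝ) :=
  Submodule.span ℝ
    {w | ∃ S : Finset G.V, G.crossEdges S Sᶜ ⊆ 𝓔 ∧ w = G.wVec 𝓔 S}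

/-- The vector `u_V ∈ ℝ^𝓔`. -/
noncomputable def uVecR (𝓔 : Finset G.E) (S : Finset G.V) :
    {e : G.E // e ∈ 𝓔} → ℝ := fun e =>
  (if G.s e.1 ∈ S ∧ G.t e.1 ∉ S then (1 : ℝ) else 0)
    - (if G.t e.1 ∈ S ∧ G.s e.1 ∉ S then (1 : ℝ) else 0)

/-- The subspace `L_𝓔 ⊆ ℝ^𝓔` spanned by the vectors `u_V` over all `V ⊆ V(Γ)` with
`E(V,V^c) ⊆ 𝓔`. -/
noncomputable def LspaceR (𝓔 : Finset G.E) : Submodule ℝ ({e : G.E // e ∈ 𝓔} → ℝ) :=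
  Submodule.span ℝ
    {u | ∃ S : Finset G.V, G.crossEdges S Sᶜ ⊆ 𝓔 ∧ u = G.uVecR 𝓔 S}

end Multigraph


namespace Multigraph

variable (G : Multigraph) (𝓔 : Finset G.E)

lemma Fmap_isLinear : IsLinearMap ℝ (G.Fmap 𝓔) := by
  constructor
  · intro x y
    refine Prod.ext ?_ ?_
    · funext e
      simp only [Fmap, Prod.fst_add, Pi.add_apply]
      split
      · erw [Pi.add_apply, Pi.add_apply]; ring
      · erw [Pi.add_apply]
    · funext e
      simp [Fmap]
      erw [Pi.add_apply]
  · intro c x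
    refine Prod.ext ?_ ?_
    · funext e
      simp only [Fmap, Prod.smul_fst, Pi.smul_apply, smul_eq_mul]
      split
      · erw [Pi.smul_apply, Pi.smul_apply, smul_eq_mul, smul_eq_mul]; ring
      · erw [Pi.smul_apply, smul_eq_mul]
    · funext e
      simp [Fmap]
      erw [Pi.smul_apply, smul_eq_mul]

/-- Inverse of `Fmap`. -/
noncomputable def Gmapinv (y : (G.E → ℝ) × ({e : G.E // e ∈ 𝓔} → ℝ)) :
    G.EIdx 𝓔 → ℝ
  | Sum.inl e => y.1 e.1
  | Sum.inr (e, true) => y.2 e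
  | Sum.inr (e, false) => y.1 e.1 - y.2 e

lemma Fmap_leftInv : Function.LeftInverse (G.Gmapinv 𝓔) (G.Fmap 𝓔) := by
  intro x
  funext i
  match i with
  | Sum.inl e => simp [Gmapinv, Fmap, e.2]
  | Sum.inr (e, true) => simp [Gmapinv, Fmap]
  | Sum.inr (e, false) => simp [Gmapinv, Fmap, e.2]

lemma Fmap_rightInv : Function.RightInverse (G.Gmapinv 𝓔) (G.Fmap 𝓔) := by
  intro y
  refine Prod.ext ?_ ?_
  · funext e
    simp only [Fmap]
    split
    · simp [Gmapinv]
    · simp [Gmapinv]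
  · funext e
    simp [Fmap, Gmapinv]

lemma Fmap_bijective : Function.Bijective (G.Fmap 𝓔) :=
  ⟨(G.Fmap_leftInv 𝓔).injective, (G.Fmap_rightInv 𝓔).surjective⟩

/-- `Fmap` as a linear map. -/
noncomputable def FmapL : (G.EIdx 𝓔 → ℝ) →ₗ[ℝ]
    (G.E → ℝ) × ({e : G.E // e ∈ 𝓔} → ℝ) :=
  (G.Fmap_isLinear 𝓔).mk' _

lemma Fmap_wVec (S : Finset G.V) :
    G.Fmap 𝓔 (G.wVec 𝓔 S) = (0, G.uVecR 𝓔 S) := by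
  refine Prod.ext ?_ ?_
  · funext e
    simp only [Fmap]
    split
    · rename_i h
      simp only [wVec]
      by_cases hs : G.s e ∈ S <;> by_cases ht : G.t e ∈ S <;>
        simp [hs, ht]
    · simp [wVec]
  · funext e
    simp only [Fmap, wVec, uVecR]
    by_cases hs : G.s e.1 ∈ S <;> by_cases ht : G.t e.1 ∈ S <;>
      simp [hs, ht]

end Multigraph

/-- the map `(f_𝓔, g_𝓔) : ℝ^{E(Γ^𝓔)} → ℝ^{E(Γ)} × ℝ^𝓔` is a linear
isomorphism, and it maps `𝓛_𝓔` onto `{0} × L_𝓔`. -/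
theorem Fmap_linear_bijective_image (G : Multigraph) (𝓔 : Finset G.E) :
    IsLinearMap ℝ (G.Fmap 𝓔) ∧ Function.Bijective (G.Fmap 𝓔) ∧
      G.Fmap 𝓔 '' (G.LLspace 𝓔 : Set (G.EIdx 𝓔 → ℝ)) =
        {y : (G.E → ℝ) × ({e : G.E // e ∈ 𝓔} → ℝ) | y.1 = 0 ∧ y.2 ∈ G.LspaceR 𝓔} := by
  refine ⟨G.Fmap_isLinear 𝓔, G.Fmap_bijective 𝓔, ?_⟩
  have hfun : G.Fmap 𝓔 = G.FmapL 𝓔 := rfl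
  have himg : G.Fmap 𝓔 '' (G.LLspace 𝓔 : Set (G.EIdx 𝓔 → ℝ)) =
      (Submodule.map (G.FmapL 𝓔) (G.LLspace 𝓔) : Set _) := by
    rw [hfun]; rfl
  rw [himg]
  have hmap : Submodule.map (G.FmapL 𝓔) (G.LLspace 𝓔) =
      Submodule.span ℝ ((G.Fmap 𝓔) ''
        {w | ∃ S : Finset G.V, G.crossEdges S Sᶜ ⊆ 𝓔 ∧ w = G.wVec 𝓔 S}) := by
    rw [Multigraph.LLspace, Submodule.map_span]; rfl
  have hset : (G.Fmap 𝓔) ''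
      {w | ∃ S : Finset G.V, G.crossEdges S Sᶜ ⊆ 𝓔 ∧ w = G.wVec 𝓔 S} =
      (LinearMap.inr ℝ (G.E → ℝ) _) ''
        {u | ∃ S : Finset G.V, G.crossEdges S Sᶜ ⊆ 𝓔 ∧ u = G.uVecR 𝓔 S} := by
    ext y
    constructor
    · rintro ⟨w, ⟨S, hS, rfl⟩, rfl⟩
      exact ⟨G.uVecR 𝓔 S, ⟨S, hS, rfl⟩, (G.Fmap_wVec 𝓔 S).symm⟩
    · rintro ⟨u, ⟨S, hS, rfl⟩, rfl⟩
      exact ⟨G.wVec 𝓔 S, ⟨S, hS, rfl⟩, G.Fmap_wVec 𝓔 S⟩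
  rw [hmap, hset, Submodule.span_image]
  ext y
  simp only [Submodule.map_coe, Set.mem_image, Set.mem_setOf_eq, SetLike.mem_coe]
  constructor
  · rintro ⟨u, hu, rfl⟩
    exact ⟨rfl, hu⟩
  · rintro ⟨h1, h2⟩
    exact ⟨y.2, h2, by simp [Prod.ext_iff, h1]⟩
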